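/- Let $k \ge 2$ be an even integer. Consider directed path graphs on vertex set $\{(t, i_t) : 1 \le t \le k+1\}$ with edges from $(t, i_t)$ to $(t+1, i_{t+1})$, where $i_t \in \{1, \ldots, n\}$, and where the graph is canonical: if the graph visits $(t, i_t)$ then for every $0 < i < i_t$ there exists $s < t$ with the graph visiting $(s, i)$. Call two edges parallel if they span the same ordered pair of heights $(i_t, i_{t+1}) = (i_{t'}, i_{t'+1})$ at distinct times. Then there is exactly one canonical path graph with maximal height $k/2$ in which every edge is parallel to exactly one other edge, namely the one with height sequence $(1, 2, \ldots, k/2, 1, 2, \ldots, k/2, 1)$. -/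

import Mathlib

/-- A height sequence `h : Fin (k+1) → ℕ` (with heights at least `1`) is canonical if whenever
the path visits a vertex of height `h t`, every smaller positive height has been visited at an
earlier time. -/
def CanonicalPath {k : ℕ} (h : Fin (k + 1) → ℕ) : Prop :=
  (∀ t, 1 ≤ h t) ∧ ∀ t : Fin (k + 1), ∀ i : ℕ, 0 < i → i < h t → ∃ s < t, h s = i

/-- Edges `t` and `t'` of the path with height sequence `h` are (time-translate) parallel:
they are distinct and span the same ordered pair of heights. -/
def ParallelEdges {k : ℕ} (h : Fin (k + 1) → ℕ) (t t' : Fin k) : Prop :=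
  t ≠ t' ∧ h t.castSucc = h t'.castSucc ∧ h t.succ = h t'.succ

private theorem fwd_aux (m : ℕ) (hm : 1 ≤ m) (h : Fin (m + m + 1) → ℕ)
    (hc : CanonicalPath h) (hcard : (Finset.image h Finset.univ).card = m)
    (hpar : ∀ t : Fin (m + m), ∃! t' : Fin (m + m), ParallelEdges h t t') :
    ∀ t : Fin (m + m + 1), h t = t.val % m + 1 := by
  obtain ⟨hpos, hcan⟩ := hc
  -- h 0 = 1
  have h0 : h 0 = 1 := by
    by_contra hne
    have h2 : 2 ≤ h 0 := by have := hpos 0; omega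
    obtain ⟨s, hs, -⟩ := hcan 0 1 one_pos (by omega)
    exact absurd hs (Fin.not_lt_zero s)
  -- the edge labeling
  set E : Fin (m + m) → ℕ × ℕ := fun t => (h t.castSucc, h t.succ) with hE
  have fib2 : ∀ t : Fin (m + m),
      (Finset.univ.filter fun s => E s = E t).card = 2 := by
    intro t
    obtain ⟨t', ⟨hne, hc1, hc2⟩, hu⟩ := hpar t
    have hset : (Finset.univ.filter fun s => E s = E t) = {t, t'} := by
      ext s
      simp only [Finset.mem_filter, Finset.mem_univ, true_and, Finset.mem_insert,
        Finset.mem_singleton]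
      constructor
      · intro hs
        by_cases hst : s = t
        · exact Or.inl hst
        · refine Or.inr (hu s ⟨fun he => hst he.symm, ?_, ?_⟩)
          · exact (congrArg Prod.fst hs).symm
          · exact (congrArg Prod.snd hs).symm
      · rintro (rfl | rfl)
        · rfl
        · exact Prod.ext hc1.symm hc2.symm
    rw [hset, Finset.card_insert_of_notMem (by simpa using hne), Finset.card_singleton]
  set L : Finset (ℕ × ℕ) := Finset.univ.image E with hL
  have fib2' : ∀ l ∈ L, (Finset.univ.filter fun s => E s = l).card = 2 := by
    intro l hl
    obtain ⟨t, -, rfl⟩ := Finset.mem_image.mp hl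
    exact fib2 t
  have hLcard : L.card = m := by
    have h1 : (Finset.univ : Finset (Fin (m + m))).card
        = ∑ l ∈ L, (Finset.univ.filter fun s => E s = l).card :=
      Finset.card_eq_sum_card_image E Finset.univ
    rw [Finset.sum_congr rfl fib2'] at h1
    simp only [Finset.card_univ, Fintype.card_fin, Finset.sum_const, smul_eq_mul] at h1
    omega
  -- walk identity
  have walk : ∀ a : ℕ,
      (Finset.univ.filter fun t : Fin (m + m) => h t.castSucc = a).card
        + (if h (Fin.last (m + m)) = a then 1 else 0)
      = (Finset.univ.filter fun t : Fin (m + m) => h t.succ = a).card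
        + (if h 0 = a then 1 else 0) := by
    intro a
    have e1 := Fin.sum_univ_castSucc (fun t : Fin (m + m + 1) => if h t = a then 1 else 0)
    have e2 := Fin.sum_univ_succ (fun t : Fin (m + m + 1) => if h t = a then 1 else 0)
    rw [Finset.card_filter, Finset.card_filter]
    omega
  -- parity of departures and arrivals
  have Deven : ∀ a : ℕ, (Finset.univ.filter fun t : Fin (m + m) => h t.castSucc = a).card
      = 2 * (L.filter fun l => l.1 = a).card := by
    intro a
    have key : (Finset.univ.filter fun t : Fin (m + m) => h t.castSucc = a).card
        = ∑ l ∈ L.filter (fun l => l.1 = a),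
            ((Finset.univ.filter fun t : Fin (m + m) => h t.castSucc = a).filter
              fun t => E t = l).card := by
      apply Finset.card_eq_sum_card_fiberwise
      intro x hx
      simp only [Finset.mem_coe, Finset.mem_filter, Finset.mem_univ, true_and] at hx ⊢
      exact ⟨Finset.mem_image_of_mem E (Finset.mem_univ x), hx⟩
    rw [key]
    rw [Finset.sum_congr rfl (fun l hl => ?_), Finset.sum_const, smul_eq_mul, mul_comm]
    have hfl : ((Finset.univ.filter fun t : Fin (m + m) => h t.castSucc = a).filter
        fun t => E t = l) = Finset.univ.filter fun t => E t = l := by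
      simp only [Finset.mem_filter] at hl
      ext s
      simp only [Finset.mem_filter, Finset.mem_univ, true_and, and_iff_right_iff_imp]
      intro hs
      rw [← hl.2]
      exact congrArg Prod.fst hs
    rw [hfl, fib2' l (Finset.mem_filter.mp hl).1]
  have Aeven : ∀ a : ℕ, (Finset.univ.filter fun t : Fin (m + m) => h t.succ = a).card
      = 2 * (L.filter fun l => l.2 = a).card := by
    intro a
    have key : (Finset.univ.filter fun t : Fin (m + m) => h t.succ = a).card
        = ∑ l ∈ L.filter (fun l => l.2 = a),
            ((Finset.univ.filter fun t : Fin (m + m) => h t.succ = a).filter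
              fun t => E t = l).card := by
      apply Finset.card_eq_sum_card_fiberwise
      intro x hx
      simp only [Finset.mem_coe, Finset.mem_filter, Finset.mem_univ, true_and] at hx ⊢
      exact ⟨Finset.mem_image_of_mem E (Finset.mem_univ x), hx⟩
    rw [key]
    rw [Finset.sum_congr rfl (fun l hl => ?_), Finset.sum_const, smul_eq_mul, mul_comm]
    have hfl : ((Finset.univ.filter fun t : Fin (m + m) => h t.succ = a).filter
        fun t => E t = l) = Finset.univ.filter fun t => E t = l := by
      simp only [Finset.mem_filter] at hl
      ext s
      simp only [Finset.mem_filter, Finset.mem_univ, true_and, and_iff_right_iff_imp]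
      intro hs
      rw [← hl.2]
      exact congrArg Prod.snd hs
    rw [hfl, fib2' l (Finset.mem_filter.mp hl).1]
  -- h at the last position is 1
  have hlast : h (Fin.last (m + m)) = 1 := by
    have w := walk 1
    rw [Deven 1, Aeven 1, if_pos h0] at w
    by_contra hne
    rw [if_neg hne] at w
    omega
  -- the set of visited heights as seen from edge sources
  set V : Finset ℕ := Finset.univ.image (fun t : Fin (m + m) => h t.castSucc) with hV
  have hVimg : V = Finset.image h Finset.univ := by
    ext a
    simp only [hV, Finset.mem_image, Finset.mem_univ, true_and]
    constructor
    · rintro ⟨t, rfl⟩; exact ⟨t.castSucc, rfl⟩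
    · rintro ⟨t, rfl⟩
      by_cases ht : t.val < m + m
      · exact ⟨⟨t.val, ht⟩, congrArg h (Fin.ext rfl)⟩
      · have hteq : t = Fin.last (m + m) := Fin.ext (by
          have := t.isLt
          simp only [Fin.val_last]
          omega)
        refine ⟨⟨0, by omega⟩, ?_⟩
        rw [hteq, hlast]
        have hzero : ((⟨0, by omega⟩ : Fin (m + m)).castSucc) = (0 : Fin (m + m + 1)) :=
          Fin.ext (by simp)
        rw [hzero, h0]
  have hVcard : V.card = m := by rw [hVimg, hcard]
  have houtsum : L.card = ∑ a ∈ V, (L.filter fun l => l.1 = a).card := by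
    apply Finset.card_eq_sum_card_fiberwise
    intro l hl
    obtain ⟨t, -, rfl⟩ := Finset.mem_image.mp hl
    exact Finset.mem_image_of_mem _ (Finset.mem_univ t)
  have hout1 : ∀ a ∈ V, (L.filter fun l => l.1 = a).card = 1 := by
    have hge : ∀ b ∈ V, 1 ≤ (L.filter fun l => l.1 = b).card := by
      intro b hb
      obtain ⟨t, -, rfl⟩ := Finset.mem_image.mp hb
      exact Finset.card_pos.mpr ⟨E t, Finset.mem_filter.mpr
        ⟨Finset.mem_image_of_mem _ (Finset.mem_univ t), rfl⟩⟩
    intro a ha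
    by_contra hne
    have h2 : 2 ≤ (L.filter fun l => l.1 = a).card := by have := hge a ha; omega
    have hlt : ∑ _b ∈ V, 1 < ∑ b ∈ V, (L.filter fun l => l.1 = b).card :=
      Finset.sum_lt_sum (fun b hb => hge b hb) ⟨a, ha, by omega⟩
    simp only [Finset.sum_const, smul_eq_mul, mul_one] at hlt
    rw [← houtsum, hLcard, hVcard] at hlt
    omega
  -- the walk is functional in the heights
  have F : ∀ t t' : Fin (m + m), h t.castSucc = h t'.castSucc → h t.succ = h t'.succ := by
    intro t t' heq
    have ha : h t.castSucc ∈ V := Finset.mem_image_of_mem _ (Finset.mem_univ t)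
    obtain ⟨l, hl⟩ := Finset.card_eq_one.mp (hout1 _ ha)
    have h1 : E t ∈ L.filter fun l => l.1 = h t.castSucc :=
      Finset.mem_filter.mpr ⟨Finset.mem_image_of_mem _ (Finset.mem_univ t), rfl⟩
    have h2 : E t' ∈ L.filter fun l => l.1 = h t.castSucc :=
      Finset.mem_filter.mpr ⟨Finset.mem_image_of_mem _ (Finset.mem_univ t'), heq.symm⟩
    rw [hl, Finset.mem_singleton] at h1 h2
    exact congrArg Prod.snd (h1.trans h2.symm)
  -- pass to a natural-number indexed sequence
  set g : ℕ → ℕ := fun n => h ⟨min n (m + m), by omega⟩ with hgdef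
  have hgval : ∀ (n : ℕ) (hn : n < m + m + 1), h ⟨n, hn⟩ = g n := by
    intro n hn
    rw [hgdef]
    exact congrArg h (Fin.ext (by simp only [Fin.val_mk]; omega))
  have hgF : ∀ s t : ℕ, s < m + m → t < m + m → g s = g t → g (s + 1) = g (t + 1) := by
    intro s t hs ht heq
    have e := F ⟨s, hs⟩ ⟨t, ht⟩ (by
      rw [show h (⟨s, hs⟩ : Fin (m + m)).castSucc = g s from hgval s (by omega),
          show h (⟨t, ht⟩ : Fin (m + m)).castSucc = g t from hgval t (by omega)]
      exact heq)
    rw [show h (⟨s, hs⟩ : Fin (m + m)).succ = g (s + 1) from hgval (s + 1) (by omega),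
        show h (⟨t, ht⟩ : Fin (m + m)).succ = g (t + 1) from hgval (t + 1) (by omega)] at e
    exact e
  have hg0 : g 0 = 1 := by
    rw [← hgval 0 (by omega), show (⟨0, by omega⟩ : Fin (m + m + 1)) = 0 from Fin.ext (by simp)]
    exact h0
  have hgk : g (m + m) = 1 := by
    rw [← hgval (m + m) (by omega)]
    exact hlast
  have hgpos : ∀ n, n ≤ m + m → 1 ≤ g n := by
    intro n hn
    rw [← hgval n (by omega)]
    exact hpos _
  -- the first return time to height 1
  have hPex : ∃ n, 0 < n ∧ n ≤ m + m ∧ g n = 1 := ⟨m + m, by omega, le_refl _, hgk⟩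
  obtain ⟨p, hpfind⟩ : ∃ p, p = Nat.find hPex := ⟨_, rfl⟩
  have hpspec := Nat.find_spec hPex
  rw [← hpfind] at hpspec
  obtain ⟨hppos, hple, hgp⟩ := hpspec
  have hpmin : ∀ n, 0 < n → n ≤ m + m → g n = 1 → p ≤ n := by
    intro n h1 h2 h3
    rw [hpfind]
    exact Nat.find_le ⟨h1, h2, h3⟩
  -- periodicity
  have step : ∀ r, p + r ≤ m + m → g (p + r) = g r := by
    intro r
    induction r with
    | zero => intro _; simpa using hgp.trans hg0.symm
    | succ r ih =>
      intro hr
      have h1 : g r = g (p + r) := (ih (by omega)).symm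
      have h2 := hgF r (p + r) (by omega) (by omega) h1
      rw [show p + (r + 1) = (p + r) + 1 by ring]
      exact h2.symm
  have periodic : ∀ t, t ≤ m + m → g t = g (t % p) := by
    intro t
    induction t using Nat.strong_induction_on with
    | _ t ih =>
      intro ht
      by_cases htp : t < p
      · rw [Nat.mod_eq_of_lt htp]
      · push_neg at htp
        have h1 : g t = g (t - p) := by
          have h2 := step (t - p) (by omega)
          rw [show p + (t - p) = t by omega] at h2
          exact h2
        have h2 : g (t - p) = g ((t - p) % p) := ih (t - p) (by omega) (by omega)
        have h3 : (t - p) % p = t % p := by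
          conv_rhs => rw [show t = (t - p) + p by omega, Nat.add_mod_right]
        rw [h1, h2, h3]
  -- distinctness within one period
  have distinct : ∀ s t, s < t → t < p → g s ≠ g t := by
    intro s t hst htp heq
    have iter : ∀ r, r ≤ p - t → g (s + r) = g (t + r) := by
      intro r
      induction r with
      | zero => intro _; simpa using heq
      | succ r ih =>
        intro hr
        have h1 := ih (by omega)
        have h2 := hgF (s + r) (t + r) (by omega) (by omega) h1
        rw [show s + (r + 1) = s + r + 1 by ring, show t + (r + 1) = t + r + 1 by ring]
        exact h2
    have hfin := iter (p - t) (le_refl _)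
    rw [show t + (p - t) = p by omega, hgp] at hfin
    have := hpmin (s + (p - t)) (by omega) (by omega) hfin
    omega
  -- the period is exactly m
  have hpm : p = m := by
    have himg2 : Finset.image h Finset.univ
        = Finset.image (fun r : Fin p => g r.val) Finset.univ := by
      ext a
      simp only [Finset.mem_image, Finset.mem_univ, true_and]
      constructor
      · rintro ⟨t, rfl⟩
        have hval : h t = g t.val := by
          rw [← hgval t.val t.isLt]
        refine ⟨⟨t.val % p, Nat.mod_lt _ hppos⟩, ?_⟩
        have hv : t.val ≤ m + m := by omega
        rw [hval, periodic t.val hv]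
      · rintro ⟨r, rfl⟩
        have hr : r.val < m + m + 1 := by have := r.isLt; omega
        exact ⟨⟨r.val, hr⟩, hgval r.val hr⟩
    have hinj : Function.Injective (fun r : Fin p => g r.val) := by
      intro a b hab
      rcases lt_trichotomy a.val b.val with hlt | heqv | hgt
      · exact absurd hab (distinct a.val b.val hlt b.isLt)
      · exact Fin.ext heqv
      · exact absurd hab.symm (distinct b.val a.val hgt a.isLt)
    rw [himg2, Finset.card_image_of_injective _ hinj, Finset.card_univ,
      Fintype.card_fin] at hcard
    exact hcard
  -- initial segment by canonicity
  have init : ∀ t, t < m → g t = t + 1 := by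
    intro t
    induction t using Nat.strong_induction_on with
    | _ t ih =>
      intro htm
      have hth : t < m + m + 1 := by omega
      have hgt1 : 1 ≤ g t := hgpos t (by omega)
      have hge : t + 1 ≤ g t := by
        by_contra hlt
        push_neg at hlt
        have hs : g t - 1 < t := by omega
        have h1 := ih (g t - 1) hs (by omega)
        have heq : g (g t - 1) = g t := by omega
        exact distinct (g t - 1) t hs (by omega) heq
      by_contra hne
      have hgt : t + 1 < g t := by omega
      obtain ⟨s, hslt, hseq⟩ := hcan ⟨t, hth⟩ (t + 1) (by omega)
        (by rw [hgval t hth]; exact hgt)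
      have hsv : s.val < t := hslt
      have h5 : g s.val = t + 1 := by rw [← hgval s.val s.isLt]; exact hseq
      have h6 := ih s.val (by omega) (by omega)
      omega
  -- conclusion
  intro t
  have hval : h t = g t.val := by rw [← hgval t.val t.isLt]
  have hv : t.val ≤ m + m := by have := t.isLt; omega
  have hmod : t.val % m < m := Nat.mod_lt _ (by omega)
  rw [hval, periodic t.val hv, hpm, init (t.val % m) hmod]

private theorem bwd_aux (m : ℕ) (hm : 1 ≤ m) (h : Fin (m + m + 1) → ℕ)
    (H : ∀ t : Fin (m + m + 1), h t = t.val % m + 1) :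
    (CanonicalPath h ∧ (Finset.image h Finset.univ).card = m ∧
        ∀ t : Fin (m + m), ∃! t' : Fin (m + m), ParallelEdges h t t') := by
  refine ⟨⟨fun t => by rw [H t]; omega, ?_⟩, ?_, ?_⟩
  · intro t i hi hit
    rw [H t] at hit
    have h1 : i - 1 < t.val % m := by omega
    have h2 : t.val % m ≤ t.val := Nat.mod_le _ _
    have h3 : i - 1 < t.val := by omega
    have hmod : t.val % m < m := Nat.mod_lt _ (by omega)
    refine ⟨⟨i - 1, by omega⟩, Fin.lt_def.mpr (by simpa using h3), ?_⟩
    rw [H]; simp only [Fin.val_mk]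
    rw [Nat.mod_eq_of_lt (by omega)]
    omega
  · have himg : Finset.image h Finset.univ = Finset.image (fun r => r + 1) (Finset.range m) := by
      ext a
      simp only [Finset.mem_image, Finset.mem_univ, true_and, Finset.mem_range]
      constructor
      · rintro ⟨t, rfl⟩
        exact ⟨t.val % m, Nat.mod_lt _ (by omega), (H t).symm⟩
      · rintro ⟨r, hr, rfl⟩
        refine ⟨⟨r, by omega⟩, ?_⟩
        rw [H]; simp only
        rw [Nat.mod_eq_of_lt (by omega)]
    rw [himg, Finset.card_image_of_injective _ (add_left_injective 1), Finset.card_range]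
  · intro t
    have htk : t.val < m + m := t.isLt
    have e1 : ∀ (s : Fin (m + m)), h s.castSucc = s.val % m + 1 := fun s => by rw [H]; rfl
    have e2 : ∀ (s : Fin (m + m)), h s.succ = (s.val + 1) % m + 1 := fun s => by rw [H]; rfl
    refine ⟨if ht : t.val < m then ⟨t.val + m, by omega⟩ else ⟨t.val - m, by omega⟩, ?_, ?_⟩
    · constructor
      · split <;> (intro he; have := congrArg Fin.val he; simp only [Fin.val_mk] at this; omega)
      · split <;> rename_i ht
        · rw [e1, e1, e2, e2]
          simp only [Fin.val_mk]
          rw [Nat.add_mod_right, show t.val + m + 1 = t.val + 1 + m by ring, Nat.add_mod_right]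
          exact ⟨rfl, rfl⟩
        · rw [e1, e1, e2, e2]
          simp only [Fin.val_mk]
          have h1 : t.val = (t.val - m) + m := by omega
          have h2 : t.val + 1 = (t.val - m + 1) + m := by omega
          have hm1 : t.val % m = (t.val - m) % m := by
            conv_lhs => rw [h1, Nat.add_mod_right]
          have hm2 : (t.val + 1) % m = (t.val - m + 1) % m := by
            conv_lhs => rw [h2, Nat.add_mod_right]
          rw [hm1, hm2]
          exact ⟨rfl, rfl⟩
    · rintro s ⟨hne, hcs, _⟩
      rw [e1, e1] at hcs
      have hsv : s.val % m = t.val % m := by omega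
      have hd1 : s.val / m < 2 := Nat.div_lt_of_lt_mul (by omega)
      have hd2 : t.val / m < 2 := Nat.div_lt_of_lt_mul (by omega)
      have he1 := Nat.div_add_mod s.val m
      have he2 := Nat.div_add_mod t.val m
      have hnev : s.val ≠ t.val := fun he => hne (Fin.ext he.symm)
      have hmod : t.val % m < m := Nat.mod_lt _ (by omega)
      have hsk : s.val < m + m := s.isLt
      have hc1 : s.val / m = 0 ∨ s.val / m = 1 := by interval_cases hq : (s.val / m) <;> simp
      have hc2 : t.val / m = 0 ∨ t.val / m = 1 := by interval_cases hq : (t.val / m) <;> simp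
      rcases hc1 with h1 | h1 <;> rcases hc2 with h2 | h2 <;>
        rw [h1] at he1 <;> rw [h2] at he2 <;>
        split <;> rename_i ht <;> apply Fin.ext <;> simp only [Fin.val_mk] <;> omega

theorem unique_canonical_path_graph (k : ℕ) (hk : 2 ≤ k) (hke : Even k)
    (h : Fin (k + 1) → ℕ) :
    (CanonicalPath h ∧ (Finset.image h Finset.univ).card = k / 2 ∧
        ∀ t : Fin k, ∃! t' : Fin k, ParallelEdges h t t') ↔
      ∀ t : Fin (k + 1), h t = t.val % (k / 2) + 1 := by
  obtain ⟨m, rfl⟩ := hke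
  have hm : 1 ≤ m := by omega
  have hdiv : (m + m) / 2 = m := by omega
  rw [hdiv]
  constructor
  · rintro ⟨hc, hcard, hpar⟩
    exact fwd_aux m hm h hc hcard hpar
  · intro H
    exact bwd_aux m hm h H
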